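/- Let (Mₙ, dₙ) → (M∞, d∞) in the Gromov–Hausdorff sense via correspondences Cₙ with dist(Cₙ) → 0, let I ⊂ ℝ be a bounded interval, and equip Xₙ := I × Mₙ with the causal-cylinder signed distance σₙ((t,p),(s,q)) = sqrt((s−t)² − dₙ(p,q)²) when s−t ≥ dₙ(p,q) (antisymmetrically extended, 0 otherwise). Then the correspondences Ĉₙ := Id_I × Cₙ satisfy dist⁻(Ĉₙ) → 0, where dist⁻ is the distortion with respect to the signed Lorentzian distances; hence Xₙ → X∞ in d⁻_GH. -/

import Mathlib

open scoped ENNReal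

/-- Distortion of a relation w.r.t. two real-valued two-point functions. -/
noncomputable def distortion {X Y : Type*} (dX : X → X → ℝ) (dY : Y → Y → ℝ)
    (R : Set (X × Y)) : ℝ≥0∞ :=
  ⨆ p ∈ R, ⨆ q ∈ R, ENNReal.ofReal |dX p.1 q.1 - dY p.2 q.2|

def IsCorrespondence {X Y : Type*} (R : Set (X × Y)) : Prop :=
  (∀ x, ∃ y, (x, y) ∈ R) ∧ (∀ y, ∃ x, (x, y) ∈ R)

noncomputable def dGHminus {X Y : Type*} (σX : X → X → ℝ) (σY : Y → Y → ℝ) : ℝ≥0∞ :=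
  (1 / 2) * ⨅ (R : Set (X × Y)) (_ : IsCorrespondence R), distortion σX σY R

/-- The causal-cylinder signed Lorentzian distance on `I × α` over a metric space `α`. -/
noncomputable def cylSigmaOn {α : Type*} [MetricSpace α] (I : Set ℝ)
    (x y : I × α) : ℝ :=
  if dist x.2 y.2 ≤ (y.1 : ℝ) - (x.1 : ℝ) then
    Real.sqrt (((y.1 : ℝ) - (x.1 : ℝ)) ^ 2 - dist x.2 y.2 ^ 2)
  else if dist x.2 y.2 ≤ (x.1 : ℝ) - (y.1 : ℝ) then
    - Real.sqrt (((x.1 : ℝ) - (y.1 : ℝ)) ^ 2 - dist x.2 y.2 ^ 2)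
  else 0

/-- The product correspondence `Id_I × C`. -/
def prodCorr {α β : Type*} (I : Set ℝ) (C : Set (α × β)) :
    Set ((I × α) × (I × β)) :=
  {p | p.1.1 = p.2.1 ∧ (p.1.2, p.2.2) ∈ C}

/-- Signed form of the cylinder distance. -/
lemma cylSigmaOn_eq {α : Type*} [MetricSpace α] (I : Set ℝ) (x y : I × α) :
    cylSigmaOn I x y =
      if (0:ℝ) ≤ (y.1 : ℝ) - (x.1 : ℝ) then
        Real.sqrt (((y.1 : ℝ) - (x.1 : ℝ)) ^ 2 - dist x.2 y.2 ^ 2)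
      else - Real.sqrt (((y.1 : ℝ) - (x.1 : ℝ)) ^ 2 - dist x.2 y.2 ^ 2) := by
  have hd0 : (0:ℝ) ≤ dist x.2 y.2 := dist_nonneg
  unfold cylSigmaOn
  by_cases h1 : dist x.2 y.2 ≤ (y.1 : ℝ) - x.1
  · rw [if_pos h1, if_pos (le_trans hd0 h1)]
  · by_cases h2 : dist x.2 y.2 ≤ (x.1 : ℝ) - y.1
    · rw [if_neg h1, if_pos h2]
      have hneg : ¬ (0:ℝ) ≤ (y.1 : ℝ) - x.1 := by
        intro h
        have hd : dist x.2 y.2 = 0 := le_antisymm (by linarith) hd0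
        exact h1 (by rw [hd]; linarith)
      rw [if_neg hneg, show ((x.1 : ℝ) - y.1) ^ 2 = ((y.1 : ℝ) - x.1) ^ 2 by ring]
    · rw [if_neg h1, if_neg h2]
      have h5 : ((y.1 : ℝ) - x.1) ^ 2 - dist x.2 y.2 ^ 2 ≤ 0 := by
        rcases le_or_gt 0 ((y.1 : ℝ) - x.1) with h | h
        · nlinarith [lt_of_not_ge h1]
        · nlinarith [lt_of_not_ge h2]
      simp [Real.sqrt_eq_zero'.2 h5]

lemma sqrt_sub_sqrt_le {a b : ℝ} (h : b ≤ a) :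
    Real.sqrt a - Real.sqrt b ≤ Real.sqrt (a - b) := by
  rcases le_or_gt b 0 with hb | hb
  · rw [Real.sqrt_eq_zero'.2 hb, sub_zero]
    exact Real.sqrt_le_sqrt (by linarith)
  · have h1 : Real.sqrt a ≤ Real.sqrt b + Real.sqrt (a - b) := by
      have hab : 0 ≤ a - b := by linarith
      have := Real.sq_sqrt hb.le
      have := Real.sq_sqrt hab
      have := Real.sqrt_nonneg b
      have := Real.sqrt_nonneg (a - b)
      have h2 : a ≤ (Real.sqrt b + Real.sqrt (a - b)) ^ 2 := by nlinarith
      calc Real.sqrt a ≤ Real.sqrt ((Real.sqrt b + Real.sqrt (a - b)) ^ 2) :=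
            Real.sqrt_le_sqrt h2
        _ = Real.sqrt b + Real.sqrt (a - b) := Real.sqrt_sq (by positivity)
    linarith

/-- Key analytic estimate. -/
lemma key_estimate {T D δ d d' : ℝ} (hd : 0 ≤ d) (hd' : 0 ≤ d')
    (hT : |T| ≤ D) (hδ : |d - d'| ≤ δ) :
    |Real.sqrt (T ^ 2 - d ^ 2) - Real.sqrt (T ^ 2 - d' ^ 2)| ≤
      Real.sqrt (δ * (2 * D + δ)) := by
  have hδ0 : 0 ≤ δ := le_trans (abs_nonneg _) hδ
  have hD0 : 0 ≤ D := le_trans (abs_nonneg _) hT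
  wlog h : d' ≤ d generalizing d d'
  · rw [abs_sub_comm]
    exact this hd' hd (by rwa [abs_sub_comm]) (le_of_not_ge h)
  -- now d' ≤ d, so T² - d² ≤ T² - d'²
  rcases le_or_gt (T ^ 2 - d' ^ 2) 0 with hnp | hp
  · rw [Real.sqrt_eq_zero'.2 hnp, Real.sqrt_eq_zero'.2 (by nlinarith)]
    simpa using Real.sqrt_nonneg _
  · have hd'D : d' ≤ D := by nlinarith [abs_le.1 hT]
    have hdd : d ≤ d' + δ := by linarith [abs_le.1 hδ]
    have hmono : Real.sqrt (T ^ 2 - d ^ 2) ≤ Real.sqrt (T ^ 2 - d' ^ 2) :=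
      Real.sqrt_le_sqrt (by nlinarith)
    rw [abs_sub_comm, abs_of_nonneg (by linarith)]
    calc Real.sqrt (T ^ 2 - d' ^ 2) - Real.sqrt (T ^ 2 - d ^ 2)
        ≤ Real.sqrt ((T ^ 2 - d' ^ 2) - (T ^ 2 - d ^ 2)) :=
          sqrt_sub_sqrt_le (by nlinarith)
      _ ≤ Real.sqrt (δ * (2 * D + δ)) := Real.sqrt_le_sqrt (by nlinarith)

lemma mem_le_distortion {X Y : Type*} (dX : X → X → ℝ) (dY : Y → Y → ℝ)
    {R : Set (X × Y)} {p q : X × Y} (hp : p ∈ R) (hq : q ∈ R) :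
    ENNReal.ofReal |dX p.1 q.1 - dY p.2 q.2| ≤ distortion dX dY R := by
  unfold distortion
  exact le_iSup₂_of_le p hp (le_iSup₂_of_le q hq le_rfl)

theorem cylinder_convergence
    (M : ℕ → Type*) (Minf : Type*) [∀ n, MetricSpace (M n)] [MetricSpace Minf]
    (C : ∀ n, Set (M n × Minf)) (hcorr : ∀ n, IsCorrespondence (C n))
    (hdist : Filter.Tendsto
      (fun n => distortion (fun p q : M n => dist p q) (fun p q : Minf => dist p q) (C n))
      Filter.atTop (nhds 0))
    (I : Set ℝ) (hI : Bornology.IsBounded I) (hI' : I.OrdConnected) :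
    Filter.Tendsto
      (fun n => distortion (cylSigmaOn (α := M n) I) (cylSigmaOn (α := Minf) I)
        (prodCorr I (C n))) Filter.atTop (nhds 0) ∧
    Filter.Tendsto
      (fun n => dGHminus (cylSigmaOn (α := M n) I) (cylSigmaOn (α := Minf) I))
      Filter.atTop (nhds 0) := by
  -- bound on the interval
  obtain ⟨D₀, hD₀⟩ := Metric.isBounded_iff.1 hI
  set D : ℝ := max D₀ 0 with hD
  have hD0 : 0 ≤ D := le_max_right _ _
  have hDbd : ∀ s t : I, |(t : ℝ) - (s : ℝ)| ≤ D := by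
    intro s t
    have := hD₀ s.2 t.2
    rw [Real.dist_eq] at this
    calc |(t : ℝ) - s| = |(s : ℝ) - t| := abs_sub_comm _ _
      _ ≤ D₀ := this
      _ ≤ D := le_max_left _ _
  -- first claim
  have main : Filter.Tendsto
      (fun n => distortion (cylSigmaOn (α := M n) I) (cylSigmaOn (α := Minf) I)
        (prodCorr I (C n))) Filter.atTop (nhds 0) := by
    rw [ENNReal.tendsto_atTop_zero]
    intro ε hε
    -- real-valued ε
    set ε' : ℝ := (min ε 1).toReal with hε'
    have hmne : (min ε 1 : ℝ≥0∞) ≠ ⊤ :=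
      ne_of_lt (lt_of_le_of_lt (min_le_right _ _) (by norm_num))
    have hε'pos : 0 < ε' :=
      ENNReal.toReal_pos (ne_of_gt (lt_min hε (by norm_num))) hmne
    have hε'le : ENNReal.ofReal ε' ≤ ε := by
      rw [hε', ENNReal.ofReal_toReal hmne]
      exact min_le_left _ _
    -- choose δ
    set δ : ℝ := min 1 (ε' ^ 2 / (2 * D + 1)) with hδdef
    have hδpos : 0 < δ := by
      apply lt_min one_pos
      positivity
    have hsqrt : Real.sqrt (δ * (2 * D + δ)) ≤ ε' := by
      have h1 : δ * (2 * D + δ) ≤ ε' ^ 2 := by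
        have hδ1 : δ ≤ 1 := min_le_left _ _
        have hδ2 : δ ≤ ε' ^ 2 / (2 * D + 1) := min_le_right _ _
        have h3 : δ * (2 * D + 1) ≤ ε' ^ 2 := by
          have h4 := mul_le_mul_of_nonneg_right hδ2 (show (0:ℝ) ≤ 2 * D + 1 by linarith)
          rwa [div_mul_cancel₀ _ (show (2:ℝ) * D + 1 ≠ 0 by positivity)] at h4
        nlinarith
      calc Real.sqrt (δ * (2 * D + δ)) ≤ Real.sqrt (ε' ^ 2) := Real.sqrt_le_sqrt h1
        _ = ε' := Real.sqrt_sq hε'pos.le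
    -- eventually distortion small
    obtain ⟨N, hN⟩ := ENNReal.tendsto_atTop_zero.1 hdist (ENNReal.ofReal δ)
      (by simp [hδpos])
    refine ⟨N, fun n hn => ?_⟩
    have hCn := hN n hn
    -- pointwise distance estimate from distortion of C n
    have hpt : ∀ p q : M n × Minf, p ∈ C n → q ∈ C n →
        |dist p.1 q.1 - dist p.2 q.2| ≤ δ := by
      intro p q hp hq
      have := le_trans (mem_le_distortion (fun p q : M n => dist p q)
        (fun p q : Minf => dist p q) hp hq) hCn
      exact (ENNReal.ofReal_le_ofReal_iff hδpos.le).1 this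
    refine le_trans ?_ hε'le
    -- bound the cylinder distortion
    apply iSup₂_le; intro p hp
    apply iSup₂_le; intro q hq
    apply ENNReal.ofReal_le_ofReal
    obtain ⟨hpt1, hpC⟩ := hp
    obtain ⟨hqt1, hqC⟩ := hq
    rw [cylSigmaOn_eq, cylSigmaOn_eq]
    have hTeq : ((q.2.1 : ℝ) - p.2.1) = ((q.1.1 : ℝ) - p.1.1) := by
      rw [← hpt1, ← hqt1]
    set T : ℝ := (q.1.1 : ℝ) - p.1.1 with hT
    have hTD : |T| ≤ D := hDbd _ _
    set d : ℝ := dist p.1.2 q.1.2 with hd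
    set d' : ℝ := dist p.2.2 q.2.2 with hd'
    have hdd' : |d - d'| ≤ δ := hpt (p.1.2, p.2.2) (q.1.2, q.2.2) hpC hqC
    rw [hTeq]
    have hkey := key_estimate (T := T) (D := D) dist_nonneg dist_nonneg hTD hdd'
    refine le_trans ?_ hsqrt
    split_ifs with h
    · exact hkey
    · rw [show -Real.sqrt (T ^ 2 - d ^ 2) - -Real.sqrt (T ^ 2 - d' ^ 2)
          = -(Real.sqrt (T ^ 2 - d ^ 2) - Real.sqrt (T ^ 2 - d' ^ 2)) by ring, abs_neg]
      exact hkey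
  refine ⟨main, ?_⟩
  -- second claim: squeeze
  have hle : ∀ n, dGHminus (cylSigmaOn (α := M n) I) (cylSigmaOn (α := Minf) I)
      ≤ (1 / 2) * distortion (cylSigmaOn (α := M n) I) (cylSigmaOn (α := Minf) I)
        (prodCorr I (C n)) := by
    intro n
    have hcorr' : IsCorrespondence (prodCorr I (C n)) := by
      constructor
      · rintro ⟨t, x⟩
        obtain ⟨y, hy⟩ := (hcorr n).1 x
        exact ⟨(t, y), rfl, hy⟩
      · rintro ⟨t, y⟩
        obtain ⟨x, hx⟩ := (hcorr n).2 y
        exact ⟨(t, x), rfl, hx⟩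
    exact mul_le_mul_right (iInf₂_le _ hcorr') _
  have htend : Filter.Tendsto
      (fun n => (1 / 2 : ℝ≥0∞) * distortion (cylSigmaOn (α := M n) I)
        (cylSigmaOn (α := Minf) I) (prodCorr I (C n))) Filter.atTop (nhds 0) := by
    have := ENNReal.Tendsto.const_mul (a := (1 / 2 : ℝ≥0∞)) main
      (Or.inr (by norm_num))
    simpa using this
  exact tendsto_of_tendsto_of_tendsto_of_le_of_le tendsto_const_nhds htend
    (fun n => zero_le) hle
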